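/- Let c_1,...,c_n be real and d_2,...,d_n positive, with P_m defined by P_0=1, P_1(x)=x-c_1, P_{m+1}(x)=(x-c_{m+1})P_m(x)-d_{m+1}(x^2+1)P_{m-1}(x). Fix real p with P_m(p) ≠ 0 for 0 ≤ m ≤ n-1. Define r_{n,0} = c_1 - p and r_{n,m+1} = c_{m+2} - p - (p^2+1)d_{m+2}/r_{n,m} for 0 ≤ m ≤ n-2. Then r_{n,m} = -P_{m+1}(p)/P_m(p) for all 0 ≤ m ≤ n-1. -/

import Mathlib

theorem stmt17 (n : ℕ) (hn : 1 ≤ n) (c d : ℕ → ℝ) (p : ℝ)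
    (hd : ∀ k, 2 ≤ k → k ≤ n → 0 < d k)
    (P : ℕ → ℝ → ℝ)
    (hP0 : ∀ x, P 0 x = 1) (hP1 : ∀ x, P 1 x = x - c 1)
    (hPrec : ∀ m x, P (m+2) x = (x - c (m+2)) * P (m+1) x - d (m+2) * (x^2+1) * P m x)
    (hPnz : ∀ m, m + 1 ≤ n → P m p ≠ 0)
    (r : ℕ → ℝ)
    (hr0 : r 0 = c 1 - p)
    (hrrec : ∀ m, m + 2 ≤ n → r (m+1) = c (m+2) - p - (p^2+1) * d (m+2) / r m) :
    ∀ m, m + 1 ≤ n → r m = - P (m+1) p / P m p := by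
  intro m
  induction m with
  | zero =>
    intro _
    rw [hr0, hP0, hP1]; ring
  | succ m ih =>
    intro h
    have hm : m + 1 ≤ n := by omega
    have hPm : P m p ≠ 0 := hPnz m hm
    have hPm1 : P (m+1) p ≠ 0 := hPnz (m+1) h
    have hrm := ih hm
    have hrne : r m ≠ 0 := by
      rw [hrm]
      exact div_ne_zero (neg_ne_zero.mpr hPm1) hPm
    rw [hrrec m h, hrm, hPrec m p]
    have h1 : P (1+m) p ≠ 0 := by rwa [add_comm]
    field_simp
    ring_nf
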